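/- Let K(x) = 1 - 2 Σ_{k=1}^∞ (-1)^{k-1} e^{-2k²x²} for x > 0 (and 0 for x ≤ 0) be the Kolmogorov distribution function. Then the mean of the Kolmogorov distribution equals √(π/2)·log 2. -/

import Mathlib

open Real MeasureTheory Filter Finset Topology

/-- Partial sums of an alternating series with nonneg antitone terms lie in `[0, a 0]`. -/
lemma alt_partial_bounds (a : ℕ → ℝ) (ha : ∀ k, 0 ≤ a k) (hd : Antitone a) (n : ℕ) :
    0 ≤ ∑ i ∈ range n, (-1 : ℝ) ^ i * a i ∧ ∑ i ∈ range n, (-1 : ℝ) ^ i * a i ≤ a 0 := by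
  induction n using Nat.twoStepInduction with
  | zero => simp [ha 0]
  | one => simp [ha 0]
  | more n ih1 ih2 =>
    obtain ⟨h1l, h1u⟩ := ih1
    obtain ⟨h2l, h2u⟩ := ih2
    have hstep : a (n + 1) ≤ a n := hd (Nat.le_succ n)
    have han1 := ha (n + 1)
    rw [sum_range_succ] at h2l h2u ⊢
    rw [sum_range_succ]
    rcases Nat.even_or_odd n with he | ho
    · have e1 : (-1 : ℝ) ^ n = 1 := he.neg_one_pow
      have e2 : (-1 : ℝ) ^ (n + 1) = -1 := by rw [pow_succ, e1]; ring
      constructor <;> nlinarith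
    · have e1 : (-1 : ℝ) ^ n = -1 := ho.neg_one_pow
      have e2 : (-1 : ℝ) ^ (n + 1) = 1 := by rw [pow_succ, e1]; ring
      constructor <;> nlinarith

lemma alt_harmonic_even (n : ℕ) :
    ∑ k ∈ range (2 * n), (-1 : ℝ) ^ k * (1 / ((k : ℝ) + 1)) =
      (harmonic (2 * n) : ℝ) - (harmonic n : ℝ) := by
  induction n with
  | zero => simp
  | succ n ih =>
    have h2 : 2 * (n + 1) = 2 * n + 1 + 1 := by ring
    rw [h2, sum_range_succ, sum_range_succ, ih, harmonic_succ, harmonic_succ, harmonic_succ]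
    have e1 : (-1 : ℝ) ^ (2 * n) = 1 := by simp [pow_mul]
    have e2 : (-1 : ℝ) ^ (2 * n + 1) = -1 := by rw [pow_succ, e1]; ring
    push_cast
    rw [e1, e2]
    have hn1 : ((n : ℝ) + 1) ≠ 0 := by positivity
    have hn2 : (2 * (n : ℝ) + 1) ≠ 0 := by positivity
    have hn3 : (2 * (n : ℝ) + 1 + 1) ≠ 0 := by positivity
    field_simp
    ring

lemma tendsto_alt_harmonic :
    Tendsto (fun n : ℕ => ∑ k ∈ range n, (-1 : ℝ) ^ k * (1 / ((k : ℝ) + 1))) atTop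
      (𝓝 (Real.log 2)) := by
  obtain ⟨l, hl⟩ :=
    Antitone.tendsto_alternating_series_of_tendsto_zero
      (f := fun k : ℕ => 1 / ((k : ℝ) + 1))
      (by
        intro k m hkm
        have hcast : (k : ℝ) ≤ m := Nat.cast_le.2 hkm
        have hk : (0 : ℝ) < (k : ℝ) + 1 := by positivity
        apply div_le_div_of_nonneg_left one_pos.le hk
        linarith)
      (by
        have := tendsto_one_div_add_atTop_nhds_zero_nat (𝕜 := ℝ)
        simpa using this)
  have h2n : Tendsto (fun n : ℕ => 2 * n) atTop atTop :=
    tendsto_atTop_mono (fun n => Nat.le_mul_of_pos_left n (by norm_num)) tendsto_id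
  have hsub : Tendsto (fun n : ℕ =>
      ∑ k ∈ range (2 * n), (-1 : ℝ) ^ k * (1 / ((k : ℝ) + 1))) atTop (𝓝 l) :=
    hl.comp h2n
  have hHlim : Tendsto (fun n : ℕ => (harmonic (2 * n) : ℝ) - (harmonic n : ℝ)) atTop
      (𝓝 (Real.log 2)) := by
    have hγ := Real.tendsto_harmonic_sub_log
    have hγ2 : Tendsto (fun n : ℕ => (harmonic (2 * n) : ℝ) - Real.log ((2 * n : ℕ) : ℝ)) atTop
        (𝓝 Real.eulerMascheroniConstant) := hγ.comp h2n
    have key := (hγ2.sub hγ).add (tendsto_const_nhds (x := Real.log 2))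
    rw [sub_self, zero_add] at key
    apply key.congr'
    filter_upwards [eventually_ge_atTop 1] with n hn
    have hn0 : (n : ℝ) ≠ 0 := by
      have : (1 : ℝ) ≤ n := by exact_mod_cast hn
      linarith
    have hlog : Real.log (2 * (n : ℕ) : ℕ) = Real.log 2 + Real.log n := by
      push_cast
      rw [Real.log_mul (by norm_num) hn0]
    rw [hlog]
    ring
  have hl2 : l = Real.log 2 := by
    apply tendsto_nhds_unique hsub
    apply hHlim.congr
    intro n
    exact (alt_harmonic_even n).symm
  rwa [hl2] at hl

theorem kolmogorov_mean :
    ∫ x in Set.Ioi (0 : ℝ),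
        2 * ∑' k : ℕ, (-1 : ℝ) ^ k * Real.exp (-2 * ((k : ℝ) + 1) ^ 2 * x ^ 2) =
      Real.sqrt (Real.pi / 2) * Real.log 2 := by
  set c := Real.sqrt (Real.pi / 2) with hc
  set F : ℕ → ℝ → ℝ := fun n x =>
    2 * ∑ k ∈ range n, (-1 : ℝ) ^ k * Real.exp (-2 * ((k : ℝ) + 1) ^ 2 * x ^ 2) with hF
  -- each Gaussian term is integrable on Ioi 0
  have hint : ∀ k : ℕ, IntegrableOn
      (fun x : ℝ => Real.exp (-2 * ((k : ℝ) + 1) ^ 2 * x ^ 2)) (Set.Ioi 0) := by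
    intro k
    have hb : (0 : ℝ) < 2 * ((k : ℝ) + 1) ^ 2 := by positivity
    have h := (integrable_exp_neg_mul_sq hb).integrableOn (s := Set.Ioi 0)
    apply h.congr_fun _ measurableSet_Ioi
    intro x _
    ring_nf
  -- integral of each term
  have hterm : ∀ k : ℕ, ∫ x in Set.Ioi (0 : ℝ),
      Real.exp (-2 * ((k : ℝ) + 1) ^ 2 * x ^ 2) = c / (2 * ((k : ℝ) + 1)) := by
    intro k
    have hg := integral_gaussian_Ioi (2 * ((k : ℝ) + 1) ^ 2)
    have heq : (fun x : ℝ => Real.exp (-2 * ((k : ℝ) + 1) ^ 2 * x ^ 2)) =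
        (fun x : ℝ => Real.exp (-(2 * ((k : ℝ) + 1) ^ 2) * x ^ 2)) := by
      funext x; ring_nf
    rw [show (∫ x in Set.Ioi (0 : ℝ), Real.exp (-2 * ((k : ℝ) + 1) ^ 2 * x ^ 2)) =
        ∫ x in Set.Ioi (0 : ℝ), Real.exp (-(2 * ((k : ℝ) + 1) ^ 2) * x ^ 2) from by rw [← heq]]
    rw [hg]
    have h1 : Real.pi / (2 * ((k : ℝ) + 1) ^ 2) = (Real.pi / 2) / ((k : ℝ) + 1) ^ 2 :=
      (div_div Real.pi 2 (((k : ℝ) + 1) ^ 2)).symm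
    rw [h1, Real.sqrt_div (by positivity : (0 : ℝ) ≤ Real.pi / 2),
      Real.sqrt_sq (by positivity : (0 : ℝ) ≤ (k : ℝ) + 1), ← hc]
    rw [div_div, mul_comm]
  -- integral of partial sums
  have hFint : ∀ n : ℕ, ∫ x in Set.Ioi (0 : ℝ), F n x =
      c * ∑ k ∈ range n, (-1 : ℝ) ^ k * (1 / ((k : ℝ) + 1)) := by
    intro n
    simp only [hF]
    rw [MeasureTheory.integral_const_mul]
    rw [integral_finset_sum _ (fun k _ => ((hint k).const_mul _))]
    have : ∀ k ∈ range n, (∫ x in Set.Ioi (0 : ℝ),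
        (-1 : ℝ) ^ k * Real.exp (-2 * ((k : ℝ) + 1) ^ 2 * x ^ 2)) =
        (-1 : ℝ) ^ k * (c / (2 * ((k : ℝ) + 1))) := by
      intro k _
      rw [MeasureTheory.integral_const_mul, hterm k]
    rw [Finset.sum_congr rfl this, Finset.mul_sum, Finset.mul_sum]
    apply Finset.sum_congr rfl
    intro k _
    have : ((k : ℝ) + 1) ≠ 0 := by positivity
    field_simp
  -- dominated convergence
  have hbound_int : Integrable (fun x : ℝ => 2 * Real.exp (-2 * x ^ 2))
      (volume.restrict (Set.Ioi 0)) :=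
    ((integrable_exp_neg_mul_sq (by norm_num : (0 : ℝ) < 2)).integrableOn).const_mul 2
  have hmeas : ∀ n : ℕ, AEStronglyMeasurable (F n) (volume.restrict (Set.Ioi 0)) := by
    intro n
    apply Continuous.aestronglyMeasurable
    simp only [hF]
    fun_prop
  have h_bound : ∀ n : ℕ, ∀ᵐ x ∂(volume.restrict (Set.Ioi (0 : ℝ))),
      ‖F n x‖ ≤ 2 * Real.exp (-2 * x ^ 2) := by
    intro n
    refine ae_of_all _ (fun x => ?_)
    set a : ℕ → ℝ := fun k => Real.exp (-2 * ((k : ℝ) + 1) ^ 2 * x ^ 2) with ha_def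
    have ha : ∀ k, 0 ≤ a k := fun k => (Real.exp_pos _).le
    have hd : Antitone a := by
      intro k m hkm
      have hcast : (k : ℝ) ≤ m := Nat.cast_le.2 hkm
      apply Real.exp_le_exp.2
      nlinarith [mul_nonneg (mul_nonneg (by linarith : (0:ℝ) ≤ (m:ℝ) - k)
        (by positivity : (0:ℝ) ≤ (m:ℝ) + k + 2)) (sq_nonneg x)]
    obtain ⟨h1, h2⟩ := alt_partial_bounds a ha hd n
    have ha0 : a 0 = Real.exp (-2 * x ^ 2) := by
      simp only [ha_def]
      norm_num
    have habs : |∑ i ∈ range n, (-1 : ℝ) ^ i * a i| ≤ Real.exp (-2 * x ^ 2) := by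
      rw [← ha0]
      exact abs_le.2 ⟨by linarith, h2⟩
    simp only [hF, Real.norm_eq_abs, abs_mul, abs_two]
    linarith
  have h_lim : ∀ᵐ x ∂(volume.restrict (Set.Ioi (0 : ℝ))),
      Tendsto (fun n => F n x) atTop
        (𝓝 (2 * ∑' k : ℕ, (-1 : ℝ) ^ k * Real.exp (-2 * ((k : ℝ) + 1) ^ 2 * x ^ 2))) := by
    rw [ae_restrict_iff' measurableSet_Ioi]
    refine ae_of_all _ (fun x hx => ?_)
    have hx0 : (0 : ℝ) < x := hx
    set r : ℝ := Real.exp (-2 * x ^ 2) with hr_def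
    have hr0 : 0 ≤ r := (Real.exp_pos _).le
    have hr1 : r < 1 := by
      rw [hr_def]
      apply Real.exp_lt_one_iff.mpr
      nlinarith
    have hsum : Summable (fun k : ℕ => (-1 : ℝ) ^ k *
        Real.exp (-2 * ((k : ℝ) + 1) ^ 2 * x ^ 2)) := by
      apply Summable.of_abs
      refine Summable.of_nonneg_of_le (fun k => abs_nonneg _) (fun k => ?_)
        ((summable_geometric_of_lt_one hr0 hr1).mul_left r)
      have he : |(-1 : ℝ) ^ k * Real.exp (-2 * ((k : ℝ) + 1) ^ 2 * x ^ 2)|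
          = Real.exp (-2 * ((k : ℝ) + 1) ^ 2 * x ^ 2) := by
        rw [abs_mul, abs_pow, abs_neg, abs_one, one_pow, one_mul,
          abs_of_pos (Real.exp_pos _)]
      rw [he]
      have hpow : r * r ^ k = Real.exp (((k : ℝ) + 1) * (-2 * x ^ 2)) := by
        rw [show ((k : ℝ) + 1) * (-2 * x ^ 2) = (-2 * x ^ 2) + (k : ℝ) * (-2 * x ^ 2) by ring,
          Real.exp_add, hr_def, ← Real.exp_nat_mul]
      rw [hpow]
      apply Real.exp_le_exp.2
      have hk0 : (0 : ℝ) ≤ (k : ℝ) := Nat.cast_nonneg k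
      nlinarith [mul_nonneg (mul_nonneg hk0 (by linarith : (0 : ℝ) ≤ (k : ℝ) + 1)) (sq_nonneg x)]
    have := (hsum.hasSum.tendsto_sum_nat).const_mul 2
    simpa only [hF] using this
  have hdct := MeasureTheory.tendsto_integral_of_dominated_convergence
    (fun x : ℝ => 2 * Real.exp (-2 * x ^ 2)) hmeas hbound_int h_bound h_lim
  have hlim2 : Tendsto (fun n : ℕ => ∫ x in Set.Ioi (0 : ℝ), F n x) atTop
      (𝓝 (c * Real.log 2)) := by
    simp only [hFint]
    exact tendsto_alt_harmonic.const_mul c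
  exact tendsto_nhds_unique hdct hlim2
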